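/- Let (f_n) be a bounded sequence in L¹(μ) on a finite measure space that is uniformly integrable. Then (f_n) has a subsequence converging weakly in L¹(μ) (Dunford–Pettis theorem, sequential form). -/

import Mathlib

open MeasureTheory Filter Topology ENNReal
open scoped ENNReal

local notation "⟪" x ", " y "⟫" => @inner ℝ _ _ x y

/-- Weak sequential compactness in Hilbert space, simultaneous for countably many
bounded sequences. -/
lemma exists_weak_subseq {E : Type*} [NormedAddCommGroup E] [InnerProductSpace ℝ E]
    [CompleteSpace E] (F : ℕ → ℕ → E) (B : ℕ → ℝ) (hB : ∀ k n, ‖F k n‖ ≤ B k) :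
    ∃ φ : ℕ → ℕ, StrictMono φ ∧ ∃ h : ℕ → E, ∀ k y,
      Tendsto (fun n => ⟪F k (φ n), y⟫) atTop (𝓝 ⟪h k, y⟫) := by
  -- bounds are nonnegative for nonempty... B k ≥ 0 since norms ≥ 0? ‖F k 0‖ ≤ B k
  have hB0 : ∀ k, 0 ≤ B k := fun k => (norm_nonneg _).trans (hB k 0)
  -- Step 1: diagonal extraction via compactness of a product of intervals
  set s : Set (ℕ × ℕ × ℕ → ℝ) :=
    Set.pi Set.univ (fun p => Set.Icc (-(B p.1 * B p.2.1)) (B p.1 * B p.2.1)) with hs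
  have hcomp : IsCompact s := isCompact_univ_pi fun p => isCompact_Icc
  have hmem : ∀ n, (fun p : ℕ × ℕ × ℕ => ⟪F p.1 n, F p.2.1 p.2.2⟫) ∈ s := by
    intro n
    intro p _
    have := abs_real_inner_le_norm (F p.1 n) (F p.2.1 p.2.2)
    have hb : |⟪F p.1 n, F p.2.1 p.2.2⟫| ≤ B p.1 * B p.2.1 :=
      this.trans (mul_le_mul (hB _ _) (hB _ _) (norm_nonneg _) (hB0 _))
    exact abs_le.1 hb
  obtain ⟨a, -, φ, hφ, ha⟩ := hcomp.tendsto_subseq hmem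
  refine ⟨φ, hφ, ?_⟩
  have hconv : ∀ k k' m, Tendsto (fun n => ⟪F k (φ n), F k' m⟫) atTop (𝓝 (a (k, k', m))) := by
    intro k k' m
    have := (tendsto_pi_nhds.1 ha) (k, k', m)
    exact this
  -- Step 2: for each k, the set of y where the inner products converge is everything
  have key : ∀ k, ∃ hk : E, ∀ y : E,
      Tendsto (fun n => ⟪F k (φ n), y⟫) atTop (𝓝 ⟪hk, y⟫) := by
    intro k
    set S : Submodule ℝ E :=
      { carrier := {y : E | ∃ l, Tendsto (fun n => ⟪F k (φ n), y⟫) atTop (𝓝 l)}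
        add_mem' := by
          rintro x y ⟨lx, hx⟩ ⟨ly, hy⟩
          exact ⟨lx + ly, by simpa [inner_add_right] using hx.add hy⟩
        zero_mem' := ⟨0, by simpa using tendsto_const_nhds⟩
        smul_mem' := by
          rintro c x ⟨lx, hx⟩
          exact ⟨c * lx, by simpa [inner_smul_right] using hx.const_mul c⟩ } with hSdef
    have hSclosed : IsClosed (S : Set E) := by
      apply isClosed_of_closure_subset
      intro y hy
      have hcs : CauchySeq (fun n => ⟪F k (φ n), y⟫) := by
        rw [Metric.cauchySeq_iff]
        intro ε hε
        have hden : (0:ℝ) < 3 * (B k + 1) := by have := hB0 k; linarith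
        obtain ⟨y', hy'S, hy'd⟩ := Metric.mem_closure_iff.1 hy (ε / (3 * (B k + 1)))
          (div_pos hε hden)
        obtain ⟨l', hl'⟩ := hy'S
        obtain ⟨N, hN⟩ := Metric.cauchySeq_iff.1 hl'.cauchySeq (ε / 3) (by linarith)
        refine ⟨N, fun m hm n hn => ?_⟩
        have hsub : ∀ j, |⟪F k (φ j), y⟫ - ⟪F k (φ j), y'⟫| ≤ ε / 3 := by
          intro j
          have : |⟪F k (φ j), y - y'⟫| ≤ B k * ‖y - y'‖ :=
            (abs_real_inner_le_norm _ _).trans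
              (mul_le_mul_of_nonneg_right (hB k _) (norm_nonneg _))
          rw [inner_sub_right] at this
          refine this.trans ?_
          have hyy : ‖y - y'‖ ≤ ε / (3 * (B k + 1)) := by
            rw [← dist_eq_norm]; exact le_of_lt hy'd
          have hq : B k * (ε / (3 * (B k + 1))) ≤ ε / 3 := by
            have hpos : (0:ℝ) < B k + 1 := by linarith [hB0 k]
            have h1 : B k / (B k + 1) ≤ 1 := (div_le_one hpos).2 (by linarith)
            have heq : B k * (ε / (3 * (B k + 1))) = ε / 3 * (B k / (B k + 1)) := by
              field_simp
            rw [heq]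
            calc ε / 3 * (B k / (B k + 1)) ≤ ε / 3 * 1 :=
                  mul_le_mul_of_nonneg_left h1 (by linarith)
              _ = ε / 3 := mul_one _
          exact (mul_le_mul_of_nonneg_left hyy (hB0 k)).trans hq
        have h1 := hsub m
        have h2 := hsub n
        have h3 := hN m hm n hn
        rw [Real.dist_eq] at h3 ⊢
        have : ⟪F k (φ m), y⟫ - ⟪F k (φ n), y⟫ =
            (⟪F k (φ m), y⟫ - ⟪F k (φ m), y'⟫) + (⟪F k (φ m), y'⟫ - ⟪F k (φ n), y'⟫)
              + (⟪F k (φ n), y'⟫ - ⟪F k (φ n), y⟫) := by ring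
        rw [this]
        calc |_ + _ + _| ≤ |⟪F k (φ m), y⟫ - ⟪F k (φ m), y'⟫| +
              |⟪F k (φ m), y'⟫ - ⟪F k (φ n), y'⟫| + |⟪F k (φ n), y'⟫ - ⟪F k (φ n), y⟫| := by
              exact (abs_add_le _ _).trans (by gcongr; exact abs_add_le _ _)
          _ < ε / 3 + ε / 3 + ε / 3 := by
              have h2' : |⟪F k (φ n), y'⟫ - ⟪F k (φ n), y⟫| ≤ ε / 3 := by
                rw [abs_sub_comm]; exact h2
              have : |⟪F k (φ m), y⟫ - ⟪F k (φ m), y'⟫| +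
                  |⟪F k (φ m), y'⟫ - ⟪F k (φ n), y'⟫| +
                  |⟪F k (φ n), y'⟫ - ⟪F k (φ n), y⟫| <
                  ε / 3 + ε / 3 + ε / 3 := by
                have := hN m hm n hn
                rw [Real.dist_eq] at this
                linarith
              exact this
          _ = ε := by ring
      exact cauchySeq_tendsto_of_complete hcs
    -- the span closure of all the F's
    set W : Submodule ℝ E :=
      (Submodule.span ℝ (Set.range fun p : ℕ × ℕ => F p.1 p.2)).topologicalClosure with hW
    haveI : CompleteSpace W := (Submodule.isClosed_topologicalClosure _).completeSpace_coe
    have hFW : ∀ k' m, F k' m ∈ W := fun k' m =>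
      Submodule.le_topologicalClosure _ (Submodule.subset_span ⟨(k', m), rfl⟩)
    have hWS : W ≤ S :=
      Submodule.topologicalClosure_minimal _
        (Submodule.span_le.2 (by rintro _ ⟨p, rfl⟩; exact ⟨_, hconv k p.1 p.2⟩)) hSclosed
    have hWperp : Wᗮ ≤ S := by
      intro y hy
      refine ⟨0, ?_⟩
      have hz : ∀ n, ⟪F k (φ n), y⟫ = 0 := fun n =>
        Submodule.inner_right_of_mem_orthogonal (hFW k (φ n)) hy
      simpa [hz] using (tendsto_const_nhds : Tendsto (fun _ : ℕ => (0:ℝ)) atTop (𝓝 0))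
    have hall : ∀ y : E, ∃ l, Tendsto (fun n => ⟪F k (φ n), y⟫) atTop (𝓝 l) := by
      intro y
      have htop : (⊤ : Submodule ℝ E) ≤ S := by
        rw [← Submodule.sup_orthogonal_of_hasOrthogonalProjection (K := W)]
        exact sup_le hWS hWperp
      exact htop (Submodule.mem_top : y ∈ ⊤)
    choose l hl using hall
    -- build the continuous linear functional and apply Riesz
    have hbound : ∀ y : E, |l y| ≤ B k * ‖y‖ := by
      intro y
      apply le_of_tendsto (hl y).abs
      filter_upwards with n
      exact (abs_real_inner_le_norm _ _).trans
        (mul_le_mul_of_nonneg_right (hB k _) (norm_nonneg _))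
    have hadd : ∀ x y : E, l (x + y) = l x + l y := fun x y =>
      tendsto_nhds_unique (hl (x + y)) (by simpa [inner_add_right] using (hl x).add (hl y))
    have hsmul : ∀ (c : ℝ) (x : E), l (c • x) = c * l x := fun c x =>
      tendsto_nhds_unique (hl (c • x)) (by simpa [inner_smul_right] using (hl x).const_mul c)
    set Llin : E →ₗ[ℝ] ℝ :=
      { toFun := l, map_add' := hadd, map_smul' := fun c x => by simpa using hsmul c x }
      with hLlin
    set Lc : E →L[ℝ] ℝ := LinearMap.mkContinuous Llin (B k) (fun y => by
      simpa [hLlin, Real.norm_eq_abs] using hbound y) with hLc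
    refine ⟨(InnerProductSpace.toDual ℝ E).symm Lc, fun y => ?_⟩
    have hrz : ⟪(InnerProductSpace.toDual ℝ E).symm Lc, y⟫ = Lc y :=
      InnerProductSpace.toDual_symm_apply
    rw [hrz]
    exact hl y
  choose h hh using key
  exact ⟨h, hh⟩


/-- truncation at level `k+1` -/
noncomputable def trc (k : ℕ) (x : ℝ) : ℝ := max (-((k : ℝ) + 1)) (min ((k : ℝ) + 1) x)

lemma trc_continuous (k : ℕ) : Continuous (trc k) :=
  continuous_const.max (continuous_const.min continuous_id)

lemma abs_trc_le (k : ℕ) (x : ℝ) : |trc k x| ≤ (k : ℝ) + 1 := by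
  have hk : (0:ℝ) ≤ (k:ℝ) + 1 := by positivity
  rw [abs_le, trc]
  constructor
  · exact le_max_left _ _
  · exact max_le (by linarith) (min_le_left _ _)

lemma trc_eq (k : ℕ) {x : ℝ} (h : |x| ≤ (k : ℝ) + 1) : trc k x = x := by
  rw [abs_le] at h
  rw [trc, min_eq_right h.2, max_eq_right h.1]

lemma abs_sub_trc_le (k : ℕ) (x : ℝ) : |x - trc k x| ≤ |x| := by
  have hk : (0:ℝ) ≤ (k:ℝ) + 1 := by positivity
  rcases le_total x (-((k:ℝ)+1)) with h | h
  · rw [trc, min_eq_right (by linarith : x ≤ (k:ℝ)+1), max_eq_left h]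
    rw [abs_of_nonpos (by linarith), abs_of_nonpos (by linarith)]
    linarith
  · rcases le_total ((k:ℝ)+1) x with h2 | h2
    · rw [trc, min_eq_left h2, max_eq_right (by linarith)]
      rw [abs_of_nonneg (by linarith), abs_of_nonneg (by linarith)]
      linarith
    · rw [trc_eq k (abs_le.2 ⟨h, h2⟩), sub_self, abs_zero]
      exact abs_nonneg x

/-- (Dunford–Pettis, sequential form.)  Let `(f_n)` be a bounded,
uniformly integrable sequence in `L¹(μ)` over a finite measure space.  Then `(f_n)`
has a subsequence converging weakly in `L¹(μ)`, i.e. there are a strictly monotone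
`φ : ℕ → ℕ` and an integrable `f` such that `∫ f_{φ(n)} g → ∫ f g` for every bounded
measurable `g` (equivalently, every `g ∈ L^∞`). -/
theorem dunford_pettis_sequential
    {Ω : Type*} [MeasurableSpace Ω] (μ : Measure Ω) [IsFiniteMeasure μ]
    (f : ℕ → Ω → ℝ) (hf_int : ∀ n, Integrable (f n) μ)
    (C : ℝ) (hf_bdd : ∀ n, ∫ x, |f n x| ∂μ ≤ C)
    (hui : ∀ ε : ℝ, 0 < ε → ∃ M : ℝ, 0 < M ∧ ∀ n,
      ∫ x in {x | M < |f n x|}, |f n x| ∂μ ≤ ε) :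
    ∃ φ : ℕ → ℕ, StrictMono φ ∧ ∃ flim : Ω → ℝ, Integrable flim μ ∧
      ∀ g : Ω → ℝ, Measurable g → (∃ D : ℝ, ∀ x, |g x| ≤ D) →
        Filter.Tendsto (fun n => ∫ x, f (φ n) x * g x ∂μ) Filter.atTop
          (nhds (∫ x, flim x * g x ∂μ)) := by
  classical
  -- truncated functions are in L²
  have htmeas : ∀ k n, AEStronglyMeasurable (fun x => trc k (f n x)) μ := fun k n =>
    (trc_continuous k).comp_aestronglyMeasurable (hf_int n).aestronglyMeasurable
  have htbd : ∀ k n, ∀ᵐ x ∂μ, ‖trc k (f n x)‖ ≤ (k : ℝ) + 1 := fun k n =>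
    Eventually.of_forall fun x => by simpa using abs_trc_le k (f n x)
  have htmem : ∀ k n, MemLp (fun x => trc k (f n x)) 2 μ := fun k n =>
    (memLp_top_of_bound (htmeas k n) _ (htbd k n)).mono_exponent le_top
  have htint : ∀ k n, Integrable (fun x => trc k (f n x)) μ :=
    fun k n => memLp_one_iff_integrable.1
      ((memLp_top_of_bound (htmeas k n) _ (htbd k n)).mono_exponent le_top)
  -- the truncated sequences in L²
  set F : ℕ → ℕ → Lp ℝ 2 μ := fun k n => (htmem k n).toLp _ with hFdef
  have hFcoe : ∀ k n, (F k n : Ω → ℝ) =ᵐ[μ] fun x => trc k (f n x) := fun k n =>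
    MemLp.coeFn_toLp _
  -- norm bound
  set B : ℕ → ℝ := fun k =>
    (μ Set.univ ^ (2 : ℝ≥0∞).toReal⁻¹ * ENNReal.ofReal ((k : ℝ) + 1)).toReal with hBdef
  have hFnorm : ∀ k n, ‖F k n‖ ≤ B k := by
    intro k n
    rw [Lp.norm_toLp]
    apply ENNReal.toReal_mono
    · exact ENNReal.mul_ne_top
        (ENNReal.rpow_ne_top_of_nonneg (by positivity) (measure_ne_top μ _))
        ENNReal.ofReal_ne_top
    · exact eLpNorm_le_of_ae_bound (htbd k n)
  -- weak sequential compactness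
  obtain ⟨φ, hφ, h, hh⟩ := exists_weak_subseq F B hFnorm
  refine ⟨φ, hφ, ?_⟩
  -- inner products in L² are integrals of products
  have hinner : ∀ u v : Lp ℝ 2 μ, ⟪u, v⟫ = ∫ x, u x * v x ∂μ := by
    intro u v
    rw [L2.inner_def]
    congr 1
    ext x
    exact Real.inner_apply _ _
  -- uniform truncation error bound
  have KT : ∀ ε : ℝ, 0 < ε → ∃ K : ℕ, ∀ k, K ≤ k → ∀ n,
      ∫ x, |f n x - trc k (f n x)| ∂μ ≤ ε := by
    intro ε hε
    obtain ⟨M, hM, hMui⟩ := hui ε hε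
    refine ⟨⌈M⌉₊, fun k hk n => ?_⟩
    have hMk : M ≤ (k : ℝ) + 1 := by
      have h1 : M ≤ (⌈M⌉₊ : ℝ) := Nat.le_ceil M
      have h2 : ((⌈M⌉₊ : ℕ) : ℝ) ≤ (k : ℝ) := Nat.cast_le.2 hk
      linarith
    have hzero : ∀ x, x ∉ {x | M < |f n x|} → |f n x - trc k (f n x)| = 0 := by
      intro x hx
      have hb : |f n x| ≤ (k : ℝ) + 1 := le_trans (not_lt.1 hx) hMk
      rw [trc_eq k hb, sub_self, abs_zero]
    have hint1 : Integrable (fun x => |f n x - trc k (f n x)|) μ :=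
      ((hf_int n).sub (htint k n)).abs
    have heq : ∫ x, |f n x - trc k (f n x)| ∂μ
        = ∫ x in {x | M < |f n x|}, |f n x - trc k (f n x)| ∂μ :=
      (setIntegral_eq_integral_of_forall_compl_eq_zero hzero).symm
    rw [heq]
    calc ∫ x in {x | M < |f n x|}, |f n x - trc k (f n x)| ∂μ
        ≤ ∫ x in {x | M < |f n x|}, |f n x| ∂μ :=
          integral_mono hint1.restrict (hf_int n).abs.restrict
            (fun x => abs_sub_trc_le k (f n x))
      _ ≤ ε := hMui n
  -- the weak limits, as elements of L¹
  have hL1mem : ∀ k, MemLp (h k : Ω → ℝ) 1 μ :=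
    fun k => (Lp.memLp (h k)).mono_exponent (by norm_num)
  set h1 : ℕ → Lp ℝ 1 μ := fun k => (hL1mem k).toLp _ with h1def
  have h1coe : ∀ k, (h1 k : Ω → ℝ) =ᵐ[μ] (h k : Ω → ℝ) := fun k => MemLp.coeFn_toLp _
  -- L¹ distance between weak limits controlled by truncation errors
  have hdiff : ∀ (k j : ℕ) (e : ℝ), 0 ≤ e →
      (∀ n, ∫ x, |f n x - trc k (f n x)| ∂μ ≤ e) →
      (∀ n, ∫ x, |f n x - trc j (f n x)| ∂μ ≤ e) →
      ‖h1 k - h1 j‖ ≤ 2 * e := by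
    intro k j e he hk hj
    set u : Lp ℝ 2 μ := h k - h j with hudef
    have hmk := Lp.aestronglyMeasurable u
    set v : Ω → ℝ := hmk.mk _ with hvdef
    have hveq : (u : Ω → ℝ) =ᵐ[μ] v := hmk.ae_eq_mk
    set s : Ω → ℝ := fun x => if 0 ≤ v x then 1 else -1 with hsdef
    have hsmeas : Measurable s :=
      Measurable.ite (measurableSet_le measurable_const
        hmk.stronglyMeasurable_mk.measurable) measurable_const measurable_const
    have hsbd : ∀ x, |s x| ≤ 1 := by
      intro x; by_cases h0 : 0 ≤ v x <;> simp [hsdef, h0]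
    have hsmem : MemLp s 2 μ :=
      (memLp_top_of_bound hsmeas.aestronglyMeasurable 1
        (Eventually.of_forall fun x => by simpa using hsbd x)).mono_exponent le_top
    set y : Lp ℝ 2 μ := hsmem.toLp s with hydef
    have hycoe : (y : Ω → ℝ) =ᵐ[μ] s := MemLp.coeFn_toLp _
    have habs : ∫ x, |u x| ∂μ = ⟪u, y⟫ := by
      rw [hinner]
      apply integral_congr_ae
      filter_upwards [hveq, hycoe] with x e1 e2
      rw [e2, e1]
      by_cases h0 : 0 ≤ v x
      · simp [hsdef, h0, abs_of_nonneg h0]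
      · simp [hsdef, h0, abs_of_neg (lt_of_not_ge h0)]
    have hlim : Tendsto (fun n => ⟪F k (φ n), y⟫ - ⟪F j (φ n), y⟫) atTop (𝓝 ⟪u, y⟫) := by
      have := (hh k y).sub (hh j y)
      simpa [hudef, inner_sub_left] using this
    have hbd : ∀ n, ⟪F k (φ n), y⟫ - ⟪F j (φ n), y⟫ ≤ 2 * e := by
      intro n
      have hint_k : Integrable (fun x => s x * trc k (f (φ n) x)) μ :=
        (htint k (φ n)).bdd_mul (c := 1) hsmeas.aestronglyMeasurable
          (Eventually.of_forall fun x => by simpa using hsbd x)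
      have hint_j : Integrable (fun x => s x * trc j (f (φ n) x)) μ :=
        (htint j (φ n)).bdd_mul (c := 1) hsmeas.aestronglyMeasurable
          (Eventually.of_forall fun x => by simpa using hsbd x)
      have hint_sub : Integrable
          (fun x => s x * trc k (f (φ n) x) - s x * trc j (f (φ n) x)) μ :=
        hint_k.sub hint_j
      have hint_abs : Integrable (fun x => |trc k (f (φ n) x) - trc j (f (φ n) x)|) μ :=
        ((htint k _).sub (htint j _)).abs
      have hint_abs2 : Integrable
          (fun x => |f (φ n) x - trc k (f (φ n) x)| + |f (φ n) x - trc j (f (φ n) x)|) μ :=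
        (((hf_int _).sub (htint k _)).abs.add ((hf_int _).sub (htint j _)).abs)
      have h1 : ⟪F k (φ n), y⟫ - ⟪F j (φ n), y⟫
          = ∫ x, (s x * trc k (f (φ n) x) - s x * trc j (f (φ n) x)) ∂μ := by
        rw [hinner, hinner, integral_sub hint_k hint_j]
        have ek : ∫ x, (F k (φ n) : Ω → ℝ) x * (y : Ω → ℝ) x ∂μ
            = ∫ x, s x * trc k (f (φ n) x) ∂μ := by
          apply integral_congr_ae
          filter_upwards [hFcoe k (φ n), hycoe] with x e1 e2
          rw [e1, e2]; ring
        have ej : ∫ x, (F j (φ n) : Ω → ℝ) x * (y : Ω → ℝ) x ∂μ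
            = ∫ x, s x * trc j (f (φ n) x) ∂μ := by
          apply integral_congr_ae
          filter_upwards [hFcoe j (φ n), hycoe] with x e1 e2
          rw [e1, e2]; ring
        rw [ek, ej]
      rw [h1]
      calc ∫ x, (s x * trc k (f (φ n) x) - s x * trc j (f (φ n) x)) ∂μ
          ≤ ∫ x, |trc k (f (φ n) x) - trc j (f (φ n) x)| ∂μ := by
            apply integral_mono hint_sub hint_abs
            intro x
            have hx : s x * trc k (f (φ n) x) - s x * trc j (f (φ n) x)
                = s x * (trc k (f (φ n) x) - trc j (f (φ n) x)) := by ring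
            show s x * trc k (f (φ n) x) - s x * trc j (f (φ n) x)
                ≤ |trc k (f (φ n) x) - trc j (f (φ n) x)|
            rw [hx]
            refine (le_abs_self _).trans ?_
            rw [abs_mul]
            exact mul_le_of_le_one_left (abs_nonneg _) (hsbd x)
        _ ≤ ∫ x, (|f (φ n) x - trc k (f (φ n) x)| + |f (φ n) x - trc j (f (φ n) x)|) ∂μ := by
            apply integral_mono hint_abs hint_abs2
            intro x
            show |trc k (f (φ n) x) - trc j (f (φ n) x)|
                ≤ |f (φ n) x - trc k (f (φ n) x)| + |f (φ n) x - trc j (f (φ n) x)|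
            calc |trc k (f (φ n) x) - trc j (f (φ n) x)|
                ≤ |trc k (f (φ n) x) - f (φ n) x| + |f (φ n) x - trc j (f (φ n) x)| :=
                  abs_sub_le _ _ _
              _ = |f (φ n) x - trc k (f (φ n) x)| + |f (φ n) x - trc j (f (φ n) x)| := by
                  rw [abs_sub_comm]
        _ = (∫ x, |f (φ n) x - trc k (f (φ n) x)| ∂μ)
              + ∫ x, |f (φ n) x - trc j (f (φ n) x)| ∂μ :=
            integral_add ((hf_int _).sub (htint k _)).abs ((hf_int _).sub (htint j _)).abs
        _ ≤ e + e := add_le_add (hk _) (hj _)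
        _ = 2 * e := by ring
    have hfinal : ⟪u, y⟫ ≤ 2 * e := le_of_tendsto hlim (Eventually.of_forall hbd)
    have hnorm : ‖h1 k - h1 j‖ = ∫ x, |u x| ∂μ := by
      rw [L1.norm_eq_integral_norm]
      apply integral_congr_ae
      filter_upwards [Lp.coeFn_sub (h1 k) (h1 j), h1coe k, h1coe j,
        Lp.coeFn_sub (h k) (h j)] with x e1 e2 e3 e4
      rw [hudef]
      rw [Real.norm_eq_abs, e1, e4]
      simp only [Pi.sub_apply]
      rw [e2, e3]
    rw [hnorm, habs]
    exact hfinal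
  -- Cauchy in L¹
  have hcauchy : CauchySeq h1 := by
    rw [Metric.cauchySeq_iff]
    intro ε hε
    obtain ⟨K, hK⟩ := KT (ε / 3) (by linarith)
    refine ⟨K, fun m hm n hn => ?_⟩
    rw [dist_eq_norm]
    have := hdiff m n (ε / 3) (by linarith) (hK m hm) (hK n hn)
    linarith
  obtain ⟨flimL1, hflim⟩ := cauchySeq_tendsto_of_complete hcauchy
  refine ⟨flimL1, L1.integrable_coeFn flimL1, ?_⟩
  intro g hgmeas hgbdd
  obtain ⟨D, hD⟩ := hgbdd
  set D' : ℝ := max D 0 with hD'def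
  have hD' : ∀ x, |g x| ≤ D' := fun x => (hD x).trans (le_max_left _ _)
  have hD'0 : 0 ≤ D' := le_max_right _ _
  -- g as an element of L²
  have hgmem : MemLp g 2 μ :=
    (memLp_top_of_bound hgmeas.aestronglyMeasurable D'
      (Eventually.of_forall fun x => by simpa using hD' x)).mono_exponent le_top
  set G : Lp ℝ 2 μ := hgmem.toLp g with hGdef
  have hGcoe : (G : Ω → ℝ) =ᵐ[μ] g := MemLp.coeFn_toLp _
  -- products with g are integrable
  have hmulint : ∀ u : Ω → ℝ, Integrable u μ → Integrable (fun x => u x * g x) μ := by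
    intro u hu
    have := hu.bdd_mul (c := D') hgmeas.aestronglyMeasurable
      (Eventually.of_forall fun x => by simpa using hD' x)
    exact this.congr (Eventually.of_forall fun x => by ring)
  -- inner products with G are the integrals against g
  have hFG : ∀ k n, ⟪F k n, G⟫ = ∫ x, trc k (f n x) * g x ∂μ := by
    intro k n
    rw [hinner]
    apply integral_congr_ae
    filter_upwards [hFcoe k n, hGcoe] with x e1 e2
    rw [e1, e2]
  have hHG : ∀ k, ⟪h k, G⟫ = ∫ x, (h k : Ω → ℝ) x * g x ∂μ := by
    intro k
    rw [hinner]
    apply integral_congr_ae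
    filter_upwards [hGcoe] with x e2
    rw [e2]
  -- the L¹ distance from `h k` to the limit, as an integral
  have hdist : ∀ k, ∫ x, |(h k : Ω → ℝ) x - (flimL1 : Ω → ℝ) x| ∂μ = ‖h1 k - flimL1‖ := by
    intro k
    rw [L1.norm_eq_integral_norm]
    symm
    apply integral_congr_ae
    filter_upwards [Lp.coeFn_sub (h1 k) flimL1, h1coe k] with x e1 e2
    rw [Real.norm_eq_abs, e1]
    simp only [Pi.sub_apply]
    rw [e2]
  rw [Metric.tendsto_atTop]
  intro ε hε
  have hd1 : (0:ℝ) < 4 * (D' + 1) := by linarith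
  set ε' : ℝ := ε / (4 * (D' + 1)) with hε'def
  have hε' : 0 < ε' := div_pos hε hd1
  obtain ⟨K₁, hK₁⟩ := KT ε' hε'
  obtain ⟨K₂, hK₂⟩ := (Metric.tendsto_atTop.1
    (tendsto_iff_dist_tendsto_zero.1 hflim)) ε' hε'
  set k : ℕ := max K₁ K₂ with hkdef
  have hkK₁ : K₁ ≤ k := le_max_left _ _
  have hkd : ‖h1 k - flimL1‖ ≤ ε' := by
    have := hK₂ k (le_max_right _ _)
    rw [Real.dist_eq, sub_zero, abs_of_nonneg dist_nonneg] at this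
    rw [← dist_eq_norm]
    exact this.le
  obtain ⟨N, hN⟩ := (Metric.tendsto_atTop.1 (hh k G)) ε' hε'
  refine ⟨N, fun n hn => ?_⟩
  have hA2 : |⟪F k (φ n), G⟫ - ⟪h k, G⟫| < ε' := by
    have := hN n hn
    rwa [Real.dist_eq] at this
  -- A1 : truncation error
  have hA1 : |(∫ x, f (φ n) x * g x ∂μ) - ∫ x, trc k (f (φ n) x) * g x ∂μ| ≤ D' * ε' := by
    have hint1 : Integrable (fun x => f (φ n) x * g x) μ := hmulint _ (hf_int _)
    have hint2 : Integrable (fun x => trc k (f (φ n) x) * g x) μ := hmulint _ (htint _ _)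
    have hintd : Integrable (fun x => (f (φ n) x - trc k (f (φ n) x)) * g x) μ :=
      hmulint _ ((hf_int _).sub (htint _ _))
    have heq : (∫ x, f (φ n) x * g x ∂μ) - ∫ x, trc k (f (φ n) x) * g x ∂μ
        = ∫ x, (f (φ n) x - trc k (f (φ n) x)) * g x ∂μ := by
      rw [← integral_sub hint1 hint2]
      congr 1 with x
      ring
    rw [heq]
    calc |∫ x, (f (φ n) x - trc k (f (φ n) x)) * g x ∂μ|
        ≤ ∫ x, |f (φ n) x - trc k (f (φ n) x)| * |g x| ∂μ := by
          simpa [Real.norm_eq_abs] using norm_integral_le_integral_norm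
            (fun x => (f (φ n) x - trc k (f (φ n) x)) * g x) (μ := μ)
      _ ≤ ∫ x, |f (φ n) x - trc k (f (φ n) x)| * D' ∂μ := by
          apply integral_mono (hintd.abs.congr (Eventually.of_forall fun x => abs_mul _ _))
            (((hf_int _).sub (htint _ _)).abs.mul_const D')
          intro x
          show |f (φ n) x - trc k (f (φ n) x)| * |g x|
              ≤ |f (φ n) x - trc k (f (φ n) x)| * D'
          exact mul_le_mul_of_nonneg_left (hD' x) (abs_nonneg _)
      _ = (∫ x, |f (φ n) x - trc k (f (φ n) x)| ∂μ) * D' := integral_mul_const _ _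
      _ ≤ ε' * D' := mul_le_mul_of_nonneg_right (hK₁ k hkK₁ (φ n)) hD'0
      _ = D' * ε' := mul_comm _ _
  -- A3 : distance from h k to the limit
  have hA3 : |(∫ x, (h k : Ω → ℝ) x * g x ∂μ) - ∫ x, (flimL1 : Ω → ℝ) x * g x ∂μ|
      ≤ D' * ε' := by
    have hint1 : Integrable (fun x => (h k : Ω → ℝ) x * g x) μ :=
      hmulint _ (memLp_one_iff_integrable.1 (hL1mem k))
    have hint2 : Integrable (fun x => (flimL1 : Ω → ℝ) x * g x) μ :=
      hmulint _ (L1.integrable_coeFn flimL1)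
    have hintd : Integrable (fun x => ((h k : Ω → ℝ) x - (flimL1 : Ω → ℝ) x) * g x) μ :=
      hmulint _ ((memLp_one_iff_integrable.1 (hL1mem k)).sub (L1.integrable_coeFn flimL1))
    have heq : (∫ x, (h k : Ω → ℝ) x * g x ∂μ) - ∫ x, (flimL1 : Ω → ℝ) x * g x ∂μ
        = ∫ x, ((h k : Ω → ℝ) x - (flimL1 : Ω → ℝ) x) * g x ∂μ := by
      rw [← integral_sub hint1 hint2]
      congr 1 with x
      ring
    rw [heq]
    calc |∫ x, ((h k : Ω → ℝ) x - (flimL1 : Ω → ℝ) x) * g x ∂μ|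
        ≤ ∫ x, |(h k : Ω → ℝ) x - (flimL1 : Ω → ℝ) x| * |g x| ∂μ := by
          simpa [Real.norm_eq_abs] using norm_integral_le_integral_norm
            (fun x => ((h k : Ω → ℝ) x - (flimL1 : Ω → ℝ) x) * g x) (μ := μ)
      _ ≤ ∫ x, |(h k : Ω → ℝ) x - (flimL1 : Ω → ℝ) x| * D' ∂μ := by
          apply integral_mono (hintd.abs.congr (Eventually.of_forall fun x => abs_mul _ _))
            (((memLp_one_iff_integrable.1 (hL1mem k)).sub
              (L1.integrable_coeFn flimL1)).abs.mul_const D')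
          intro x
          show |(h k : Ω → ℝ) x - (flimL1 : Ω → ℝ) x| * |g x|
              ≤ |(h k : Ω → ℝ) x - (flimL1 : Ω → ℝ) x| * D'
          exact mul_le_mul_of_nonneg_left (hD' x) (abs_nonneg _)
      _ = (∫ x, |(h k : Ω → ℝ) x - (flimL1 : Ω → ℝ) x| ∂μ) * D' := integral_mul_const _ _
      _ = ‖h1 k - flimL1‖ * D' := by rw [hdist k]
      _ ≤ ε' * D' := mul_le_mul_of_nonneg_right hkd hD'0
      _ = D' * ε' := mul_comm _ _
  -- combine
  rw [Real.dist_eq]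
  have hsplit : (∫ x, f (φ n) x * g x ∂μ) - ∫ x, (flimL1 : Ω → ℝ) x * g x ∂μ
      = ((∫ x, f (φ n) x * g x ∂μ) - ∫ x, trc k (f (φ n) x) * g x ∂μ)
        + (⟪F k (φ n), G⟫ - ⟪h k, G⟫)
        + ((∫ x, (h k : Ω → ℝ) x * g x ∂μ) - ∫ x, (flimL1 : Ω → ℝ) x * g x ∂μ) := by
    rw [hFG, hHG]
    ring
  rw [hsplit]
  have habs : |((∫ x, f (φ n) x * g x ∂μ) - ∫ x, trc k (f (φ n) x) * g x ∂μ)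
        + (⟪F k (φ n), G⟫ - ⟪h k, G⟫)
        + ((∫ x, (h k : Ω → ℝ) x * g x ∂μ) - ∫ x, (flimL1 : Ω → ℝ) x * g x ∂μ)|
      ≤ |(∫ x, f (φ n) x * g x ∂μ) - ∫ x, trc k (f (φ n) x) * g x ∂μ|
        + |⟪F k (φ n), G⟫ - ⟪h k, G⟫|
        + |(∫ x, (h k : Ω → ℝ) x * g x ∂μ) - ∫ x, (flimL1 : Ω → ℝ) x * g x ∂μ| :=
    (abs_add_le _ _).trans (by gcongr; exact abs_add_le _ _)
  have hlt : D' * ε' + ε' + D' * ε' < ε := by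
    have h1 : (2 * D' + 1) * ε' < (4 * (D' + 1)) * ε' :=
      mul_lt_mul_of_pos_right (by linarith) hε'
    have h2 : (4 * (D' + 1)) * ε' = ε := by
      rw [hε'def]
      field_simp
    nlinarith
  calc |_ + _ + _| ≤ _ := habs
    _ < ε := by linarith
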